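/- Let G be a graph and H an induced subgraph of G. Then for every s ∈ ℕ, the symbolic power of the edge ideal of H is contained in the symbolic power of the edge ideal of G: I(H)^(s) ⊆ I(G)^(s), where both ideals are viewed in the polynomial ring on the vertices of G. -/

import Mathlib

open MvPolynomial

/-- The edge ideal of a graph. -/
noncomputable def edgeIdeal (K : Type*) [Field K] {V : Type*} (G : SimpleGraph V) :
    Ideal (MvPolynomial V K) :=
  Ideal.span {f | ∃ u v, G.Adj u v ∧ f = X u * X v}

/-- The `s`-th symbolic power: the intersection of `s`-th powers of the
associated primes of `R/I`. -/
noncomputable def symbolicPower {R : Type*} [CommRing R] (I : Ideal R) (s : ℕ) : Ideal R :=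
  ⨅ p ∈ associatedPrimes R (R ⧸ I), p ^ s

/-- `G` has `x 0, x 1, ..., x (2n)` as its unique cycle. -/
def HasUniqueOddCycle {V : Type*} (G : SimpleGraph V) (n : ℕ) (x : Fin (2 * n + 1) → V) : Prop :=
  1 ≤ n ∧ Function.Injective x ∧ (∀ i, G.Adj (x i) (x (i + 1))) ∧
    ∀ (v : V) (c : G.Walk v v), c.IsCycle →
      {e | e ∈ c.edges} = Set.range (fun i : Fin (2 * n + 1) => s(x i, x (i + 1)))


open Ideal

lemma colon_isPrimary {R : Type*} [CommRing R] {Q : Ideal R} (hQ : Q.IsPrimary)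
    {x : R} (hx : x ∉ Q) :
    (Q.colon (Ideal.span {x})).IsPrimary ∧ (Q.colon (Ideal.span {x})).radical = Q.radical := by
  rw [Ideal.isPrimary_iff] at hQ
  obtain ⟨hQtop, hQp⟩ := hQ
  have hle : Q ≤ Q.colon (Ideal.span {x}) := fun r hr =>
    Ideal.mem_colon_span_singleton.2 (Ideal.mul_mem_right x _ hr)
  have hle' : Q.colon (Ideal.span {x}) ≤ Q.radical := by
    intro r hr
    rw [Ideal.mem_colon_span_singleton] at hr
    rcases hQp (mul_comm r x ▸ hr) with h | h
    · exact absurd h hx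
    · exact h
  have hrad : (Q.colon (Ideal.span {x})).radical = Q.radical := by
    refine le_antisymm ?_ (Ideal.radical_mono hle)
    calc (Q.colon (Ideal.span {x})).radical ≤ Q.radical.radical := Ideal.radical_mono hle'
      _ = Q.radical := Ideal.radical_idem _
  refine ⟨Ideal.isPrimary_iff.2 ⟨?_, ?_⟩, hrad⟩
  · intro h
    have : (1:R) ∈ Q.colon (Ideal.span {x}) := h ▸ Submodule.mem_top
    exact hx (by simpa using Ideal.mem_colon_span_singleton.1 this)
  · intro a b hab
    rw [Ideal.mem_colon_span_singleton] at hab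
    rcases hQp (show (a * x) * b ∈ Q by rw [show a * x * b = a * b * x by ring]; exact hab) with h | h
    · exact Or.inl (Ideal.mem_colon_span_singleton.2 h)
    · exact Or.inr (hrad ▸ h)

lemma mem_assoc_of_minimal {R : Type*} [CommRing R] [IsNoetherianRing R]
    {I q : Ideal R} (hq : q ∈ I.minimalPrimes) : q ∈ associatedPrimes R (R ⧸ I) := by
  classical
  obtain ⟨⟨hqp, hIq⟩, hqmin⟩ := hq
  obtain ⟨t, htI, htp, -, hirr⟩ := Ideal.IsLasker.minimal (Ideal.isLasker R R) I
  have hinfle : t.inf id ≤ q := htI.le.trans hIq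
  obtain ⟨Q, hQt, hQq⟩ := hqp.inf_le'.1 hinfle
  have hQprimary : Q.IsPrimary := htp hQt
  have hIQ : I ≤ Q := htI ▸ Finset.inf_le hQt
  have hradprime : (Ideal.radical Q).IsPrime := Ideal.isPrime_radical hQprimary
  have hradq : Ideal.radical Q = q := by
    have h1 : Ideal.radical Q ≤ q := by
      calc Ideal.radical Q ≤ q.radical := Ideal.radical_mono hQq
        _ = q := hqp.radical
    exact le_antisymm h1 (hqmin ⟨hradprime, hIQ.trans Ideal.le_radical⟩ h1)
  obtain ⟨x, hxinf, hxQ⟩ : ∃ x ∈ (t.erase Q).inf id, x ∉ Q := by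
    by_contra h
    push_neg at h
    exact hirr hQt h
  have hIeq : I = Q ⊓ (t.erase Q).inf id := by
    conv_lhs => rw [← htI, ← Finset.insert_erase hQt]
    rw [Finset.inf_insert]; rfl
  have hcolon : I.colon (Ideal.span {x}) = Q.colon (Ideal.span {x}) := by
    ext r
    rw [Ideal.mem_colon_span_singleton, Ideal.mem_colon_span_singleton, hIeq, Ideal.mem_inf]
    exact ⟨fun h => h.1, fun h => ⟨h, Ideal.mul_mem_left _ r hxinf⟩⟩
  obtain ⟨hprimary, hrad⟩ := colon_isPrimary hQprimary hxQ
  have hq_assoc : q ∈ associatedPrimes R (R ⧸ I.colon (Ideal.span {x})) := by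
    rw [hcolon, associatedPrimes.eq_singleton_of_isPrimary hprimary]
    rw [Set.mem_singleton_iff, hrad, hradq]
  -- map into R ⧸ I
  set g : R →ₗ[R] R ⧸ I := LinearMap.toSpanSingleton R (R ⧸ I) (Ideal.Quotient.mk I x) with hg
  have hker : LinearMap.ker g = (I.colon (Ideal.span {x})).restrictScalars R := by
    ext r
    simp only [LinearMap.mem_ker, hg, LinearMap.toSpanSingleton_apply,
      Submodule.restrictScalars_mem]
    rw [Ideal.mem_colon_span_singleton]
    rw [show r • (Ideal.Quotient.mk I x) = Ideal.Quotient.mk I (r * x) from rfl,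
      Ideal.Quotient.eq_zero_iff_mem]
  have hkerle : (I.colon (Ideal.span {x})).restrictScalars R ≤ LinearMap.ker g := hker.ge
  set f := Submodule.liftQ _ g hkerle with hf
  have hinj : Function.Injective f := by
    rw [← LinearMap.ker_eq_bot, hf, Submodule.ker_liftQ_eq_bot _ _ _ hker.le]
  exact associatedPrimes.subset_of_injective hinj hq_assoc

open MvPolynomial in
theorem symbolicPower_induced_subgraph_le_aux {K : Type*} [Field K] {V : Type*} [Fintype V]
    (G : SimpleGraph V) (W : Set V)
    (IG IH : Ideal (MvPolynomial V K))
    (hIG : IG = Ideal.span {f | ∃ u v, G.Adj u v ∧ f = X u * X v})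
    (hIH : IH = Ideal.span {f | ∃ u v, G.Adj u v ∧ u ∈ W ∧ v ∈ W ∧ f = X u * X v})
    (s : ℕ) :
    (⨅ p ∈ associatedPrimes (MvPolynomial V K) (MvPolynomial V K ⧸ IH), p ^ s) ≤ ⨅ p ∈ associatedPrimes (MvPolynomial V K) (MvPolynomial V K ⧸ IG), p ^ s := by
  refine le_iInf₂ fun p hp => ?_
  obtain ⟨hpp, y, hy⟩ := hp
  obtain ⟨b, rfl⟩ := Ideal.Quotient.mk_surjective y
  have hIGp : IG ≤ p := by
    rw [hy]
    intro a ha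
    apply Ideal.le_radical
    rw [Submodule.mem_colon_singleton, Submodule.mem_bot]
    show Ideal.Quotient.mk IG (a * b) = 0
    rw [Ideal.Quotient.eq_zero_iff_mem]
    exact Ideal.mul_mem_right b _ ha
  have hHG : IH ≤ IG := by
    rw [hIH, hIG]
    apply Ideal.span_mono
    rintro f ⟨u, v, h, -, -, hf⟩
    exact ⟨u, v, h, hf⟩
  haveI := hpp
  obtain ⟨q, hq, hqp⟩ := Ideal.exists_minimalPrimes_le (hHG.trans hIGp)
  calc (⨅ p ∈ associatedPrimes (MvPolynomial V K) (MvPolynomial V K ⧸ IH), p ^ s) ≤ q ^ s :=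
        iInf₂_le q (mem_assoc_of_minimal hq)
    _ ≤ p ^ s := Ideal.pow_right_mono hqp s


theorem symbolicPower_induced_subgraph_le {K : Type*} [Field K] {V : Type*} [Fintype V]
    (G : SimpleGraph V) (W : Set V)
    (IG IH : Ideal (MvPolynomial V K))
    (hIG : IG = edgeIdeal K G)
    (hIH : IH = Ideal.span {f | ∃ u v, G.Adj u v ∧ u ∈ W ∧ v ∈ W ∧ f = X u * X v})
    (s : ℕ) :
    symbolicPower IH s ≤ symbolicPower IG s := by
  unfold symbolicPower
  exact symbolicPower_induced_subgraph_le_aux G W IG IH (by rw [hIG]; rfl) hIH s
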